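/- If a graph G contains no W₄ (the wheel on 5 vertices: C₄ plus a universal vertex) as an induced minor, then the Hadwiger number of G satisfies η(G) ≤ ω(G) + 5. -/

import Mathlib

open SimpleGraph

/-- `X` is a minor model of `H` in `G`: pairwise disjoint connected bags, with an edge of `G`
between the bags of any two adjacent vertices of `H`. -/
def IsMinorModel {α V : Type*} (H : SimpleGraph α) (G : SimpleGraph V) (X : α → Set V) : Prop :=
  (∀ u v, u ≠ v → Disjoint (X u) (X v)) ∧
  (∀ u, (G.induce (X u)).Connected) ∧
  (∀ ⦃u v⦄, H.Adj u v → ∃ a ∈ X u, ∃ b ∈ X v, G.Adj a b)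

/-- `X` is an induced minor model of `H` in `G`: pairwise disjoint connected bags, with an edge
of `G` between two bags if and only if the corresponding vertices of `H` are adjacent. -/
def IsInducedMinorModel {α V : Type*} (H : SimpleGraph α) (G : SimpleGraph V)
    (X : α → Set V) : Prop :=
  (∀ u v, u ≠ v → Disjoint (X u) (X v)) ∧
  (∀ u, (G.induce (X u)).Connected) ∧
  (∀ u v, u ≠ v → ((∃ a ∈ X u, ∃ b ∈ X v, G.Adj a b) ↔ H.Adj u v))

/-- `G` contains `H` as a minor. -/
def HasMinor {V α : Type*} (G : SimpleGraph V) (H : SimpleGraph α) : Prop :=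
  ∃ X, IsMinorModel H G X

/-- `G` contains `H` as an induced minor. -/
def HasInducedMinor {V α : Type*} (G : SimpleGraph V) (H : SimpleGraph α) : Prop :=
  ∃ X, IsInducedMinorModel H G X

/-- The Hadwiger number of `G`: the largest `p` such that `K_p` is a minor of `G`. -/
noncomputable def hadwigerNumber {V : Type*} (G : SimpleGraph V) : ℕ :=
  sSup {p | HasMinor G (⊤ : SimpleGraph (Fin p))}

/-- The 4-wheel `W₄`: the 4-cycle on `{0,1,2,3}` together with the universal vertex `4`. -/
def wheel4 : SimpleGraph (Fin 5) :=
  SimpleGraph.fromRel (fun i j => j = 4 ∨ (i.val < 4 ∧ j.val < 4 ∧ j.val = (i.val + 1) % 4))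

section Auxiliary

variable {V : Type} {G : SimpleGraph V}


lemma conn_nonempty {S : Set V} (h : (G.induce S).Connected) : S.Nonempty := by
  obtain ⟨⟨v, hv⟩⟩ := h.nonempty
  exact ⟨v, hv⟩

/-- a vertex of a connected set with ≥2 elements has a neighbor in the set -/
lemma exists_adj_of_conn {S : Set V} (h : (G.induce S).Connected) {v w : V}
    (hv : v ∈ S) (hw : w ∈ S) (hne : v ≠ w) : ∃ y ∈ S, G.Adj v y := by
  obtain ⟨W⟩ := h.preconnected ⟨v, hv⟩ ⟨w, hw⟩
  cases W with
  | nil => exact (hne rfl).elim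
  | @cons _ b _ h' p => exact ⟨(b : V), b.2, h'⟩

/-- crossing edge along a walk -/
lemma cross_edge_aux {S A : Set V} :
    ∀ {x y : ↥S}, (G.induce S).Walk x y → (x : V) ∈ A → (y : V) ∉ A →
      ∃ a ∈ A, ∃ b ∈ S \ A, G.Adj a b := by
  intro x y W
  induction W with
  | nil => intro hx hy; exact absurd hx hy
  | @cons a b c hadj p ih =>
    intro hx hy
    by_cases hb : (b : V) ∈ A
    · exact ih hb hy
    · exact ⟨a, hx, b, ⟨b.2, hb⟩, hadj⟩

lemma cross_edge {S A : Set V} (h : (G.induce S).Connected) (hA : A ⊆ S)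
    (hne : A.Nonempty) (hne' : (S \ A).Nonempty) :
    ∃ a ∈ A, ∃ b ∈ S \ A, G.Adj a b := by
  obtain ⟨a, ha⟩ := hne
  obtain ⟨b, hb⟩ := hne'
  obtain ⟨W⟩ := h.preconnected ⟨a, hA ha⟩ ⟨b, hb.1⟩
  exact cross_edge_aux W ha hb.2

open Classical in
/-- In a connected set with at least two elements, there is a removable vertex avoiding `u`. -/
lemma exists_removable [Fintype V] {S : Set V} (h : (G.induce S).Connected) {u w : V}
    (hu : u ∈ S) (hw : w ∈ S) (hne : w ≠ u) :
    ∃ v ∈ S, v ≠ u ∧ (G.induce (S \ {v})).Connected := by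
  haveI : Fintype ↥S := (Set.toFinite S).fintype
  obtain ⟨vm, -, hvm⟩ := Finset.exists_max_image (Finset.univ : Finset ↥S)
    (fun x => (G.induce S).dist ⟨u, hu⟩ x) ⟨⟨u, hu⟩, Finset.mem_univ _⟩
  have hdm : ∀ x : ↥S, (G.induce S).dist ⟨u, hu⟩ x ≤ (G.induce S).dist ⟨u, hu⟩ vm :=
    fun x => hvm x (Finset.mem_univ x)
  have hvmu : (vm : V) ≠ u := by
    intro hvu
    have h1 : 0 < (G.induce S).dist ⟨u, hu⟩ ⟨w, hw⟩ :=
      h.pos_dist_of_ne (by simp [Subtype.ext_iff, hne.symm])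
    have h2 := hdm ⟨w, hw⟩
    have : (G.induce S).dist ⟨u, hu⟩ vm = 0 := by
      have : vm = ⟨u, hu⟩ := Subtype.ext hvu
      rw [this]; exact SimpleGraph.dist_self
    omega
  refine ⟨vm, vm.2, hvmu, ?_⟩
  have husd : u ∈ S \ {(vm : V)} := ⟨hu, fun hh => hvmu (by simpa using hh.symm)⟩
  apply SimpleGraph.induce_connected_of_patches u husd
  intro x hx
  -- shortest walk from u to x in the induced graph avoids vm
  obtain ⟨W, hWlen⟩ := (h.preconnected ⟨u, hu⟩ ⟨x, hx.1⟩).exists_walk_length_eq_dist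
  have hvnW : vm ∉ W.support := by
    intro hmem
    have hsp := congr_arg SimpleGraph.Walk.length (W.take_spec hmem)
    rw [SimpleGraph.Walk.length_append] at hsp
    have l1 := SimpleGraph.dist_le (W.takeUntil vm hmem)
    have l2 := SimpleGraph.dist_le (W.dropUntil vm hmem)
    have hmax := hdm ⟨x, hx.1⟩
    have hz : (G.induce S).dist vm ⟨x, hx.1⟩ = 0 := by omega
    have := (h.dist_eq_zero_iff).mp hz
    apply hx.2
    simp only [Set.mem_singleton_iff]
    exact (congrArg Subtype.val this).symm
  -- transfer the walk into `G`
  let W' := W.map (SimpleGraph.Embedding.induce S).toHom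
  refine ⟨{y | y ∈ W'.support}, ?_, ?_, ?_, ?_⟩
  · intro y hy
    simp only [Set.mem_setOf_eq, W'] at hy
    rw [SimpleGraph.Walk.support_map, List.mem_map] at hy
    obtain ⟨z, hz, rfl⟩ := hy
    refine ⟨z.2, fun hzv => ?_⟩
    exact hvnW (by rwa [show z = vm from Subtype.ext (by simpa using hzv)] at hz)
  · show u ∈ W'.support
    have := W'.start_mem_support
    simpa using this
  · show x ∈ W'.support
    have := W'.end_mem_support
    simpa using this
  · exact SimpleGraph.Walk.connected_induce_support W' _ _

lemma conn_singleton (G : SimpleGraph V) (v : V) : (G.induce {v}).Connected := by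
  haveI : Nonempty ({v} : Set V) := ⟨⟨v, rfl⟩⟩
  constructor
  intro a b
  have hab : a = b := Subtype.ext (by
    have ha : (a : V) = v := a.2
    have hb : (b : V) = v := b.2
    rw [ha, hb])
  rw [hab]

lemma split_sep_aux [Fintype V] :
    ∀ n, ∀ S : Set V, S.ncard ≤ n → (G.induce S).Connected → ∀ u w, u ∈ S → w ∈ S → u ≠ w →
    ∃ A, A ⊆ S ∧ u ∈ A ∧ w ∈ S \ A ∧ (G.induce A).Connected ∧ (G.induce (S \ A)).Connected := by
  intro n
  induction n with
  | zero =>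
    intro S hcard _ u w hu _ _
    have : S.ncard ≠ 0 := by
      have := Set.ncard_pos (Set.toFinite S) |>.mpr ⟨u, hu⟩
      omega
    omega
  | succ n ih =>
    intro S hcard hconn u w hu hw hne
    obtain ⟨v, hvS, hvu, hconn'⟩ := exists_removable hconn hu hw hne.symm
    by_cases hvw : v = w
    · subst hvw
      refine ⟨S \ {v}, Set.diff_subset, ⟨hu, by simpa using (hne.symm : v ≠ u).symm⟩,
        ⟨hvS, by simp⟩, hconn', ?_⟩
      rw [Set.diff_diff_cancel_left (by simpa using hvS)]
      exact conn_singleton G v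
    · have hcard' : (S \ {v}).ncard ≤ n := by
        have := Set.ncard_diff_singleton_lt_of_mem hvS (Set.toFinite S)
        omega
      have huS' : u ∈ S \ {v} := ⟨hu, by simpa using fun hh => hvu hh.symm⟩
      have hwS' : w ∈ S \ {v} := ⟨hw, by simpa using fun hh => hvw hh.symm⟩
      obtain ⟨A, hAS, huA, hwA, cA, cA'⟩ := ih (S \ {v}) hcard' hconn' u w huS' hwS' hne
      obtain ⟨y, hyS, hadj⟩ := exists_adj_of_conn hconn hvS hu hvu
      have hyv : y ≠ v := (hadj.ne).symm
      have hyS' : y ∈ S \ {v} := ⟨hyS, by simpa using hyv⟩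
      have hvA : v ∉ A := fun hh => (hAS hh).2 rfl
      by_cases hyA : y ∈ A
      · refine ⟨A ∪ {v}, ?_, Or.inl huA, ⟨hw, ?_⟩, ?_, ?_⟩
        · exact Set.union_subset (hAS.trans Set.diff_subset) (by simpa using hvS)
        · rintro (hh | hh)
          · exact hwA.2 hh
          · exact hvw (by simpa using hh.symm)
        · exact SimpleGraph.connected_induce_union cA.preconnected (conn_singleton G v).preconnected hyA rfl hadj.symm
        · have : S \ (A ∪ {v}) = (S \ {v}) \ A := by
            rw [Set.diff_diff]
            rw [Set.union_comm]
          rw [this]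
          exact cA'
      · have hyA' : y ∈ (S \ {v}) \ A := ⟨hyS', hyA⟩
        refine ⟨A, hAS.trans Set.diff_subset, huA, ⟨hw, hwA.2⟩, cA, ?_⟩
        have hid : S \ A = ((S \ {v}) \ A) ∪ {v} := by
          ext x
          constructor
          · rintro ⟨hxS, hxA⟩
            by_cases hxv : x = v
            · exact Or.inr (by simp [hxv])
            · exact Or.inl ⟨⟨hxS, by simpa using hxv⟩, hxA⟩
          · rintro (⟨⟨h1, _⟩, h2⟩ | hh)
            · exact ⟨h1, h2⟩
            · have : x = v := by simpa using hh
              exact ⟨this ▸ hvS, this ▸ hvA⟩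
        rw [hid]
        exact SimpleGraph.connected_induce_union cA'.preconnected (conn_singleton G v).preconnected hyA' rfl hadj.symm

lemma split_sep [Fintype V] {S : Set V} (h : (G.induce S).Connected) {u w : V}
    (hu : u ∈ S) (hw : w ∈ S) (hne : u ≠ w) :
    ∃ A, A ⊆ S ∧ u ∈ A ∧ w ∈ S \ A ∧ (G.induce A).Connected ∧ (G.induce (S \ A)).Connected :=
  split_sep_aux S.ncard S le_rfl h u w hu hw hne


private lemma eflip {A B : Set V} (h : ∃ a ∈ A, ∃ b ∈ B, G.Adj a b) :
    ∃ a ∈ B, ∃ b ∈ A, G.Adj a b := by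
  obtain ⟨a, ha, b, hb, hadj⟩ := h
  exact ⟨b, hb, a, ha, hadj.symm⟩

lemma buildW4 (S : Fin 5 → Set V)
    (hdisj : ∀ u v : Fin 5, u ≠ v → Disjoint (S u) (S v))
    (hconn : ∀ u, (G.induce (S u)).Connected)
    (e01 : ∃ a ∈ S 0, ∃ b ∈ S 1, G.Adj a b)
    (e12 : ∃ a ∈ S 1, ∃ b ∈ S 2, G.Adj a b)
    (e23 : ∃ a ∈ S 2, ∃ b ∈ S 3, G.Adj a b)
    (e30 : ∃ a ∈ S 3, ∃ b ∈ S 0, G.Adj a b)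
    (e40 : ∃ a ∈ S 4, ∃ b ∈ S 0, G.Adj a b)
    (e41 : ∃ a ∈ S 4, ∃ b ∈ S 1, G.Adj a b)
    (e42 : ∃ a ∈ S 4, ∃ b ∈ S 2, G.Adj a b)
    (e43 : ∃ a ∈ S 4, ∃ b ∈ S 3, G.Adj a b)
    (n02 : ¬ ∃ a ∈ S 0, ∃ b ∈ S 2, G.Adj a b)
    (n13 : ¬ ∃ a ∈ S 1, ∃ b ∈ S 3, G.Adj a b) :
    HasInducedMinor G wheel4 := by
  have n20 : ¬ ∃ a ∈ S 2, ∃ b ∈ S 0, G.Adj a b := fun hh => n02 (eflip hh)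
  have n31 : ¬ ∃ a ∈ S 3, ∃ b ∈ S 1, G.Adj a b := fun hh => n13 (eflip hh)
  refine ⟨S, hdisj, hconn, ?_⟩
  intro u v huv
  fin_cases u <;> fin_cases v <;>
    first
    | exact absurd rfl huv
    | exact iff_of_true e01 (by unfold wheel4; rw [SimpleGraph.fromRel_adj]; decide)
    | exact iff_of_true e12 (by unfold wheel4; rw [SimpleGraph.fromRel_adj]; decide)
    | exact iff_of_true e23 (by unfold wheel4; rw [SimpleGraph.fromRel_adj]; decide)
    | exact iff_of_true e30 (by unfold wheel4; rw [SimpleGraph.fromRel_adj]; decide)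
    | exact iff_of_true e40 (by unfold wheel4; rw [SimpleGraph.fromRel_adj]; decide)
    | exact iff_of_true e41 (by unfold wheel4; rw [SimpleGraph.fromRel_adj]; decide)
    | exact iff_of_true e42 (by unfold wheel4; rw [SimpleGraph.fromRel_adj]; decide)
    | exact iff_of_true e43 (by unfold wheel4; rw [SimpleGraph.fromRel_adj]; decide)
    | exact iff_of_true (eflip e01) (by unfold wheel4; rw [SimpleGraph.fromRel_adj]; decide)
    | exact iff_of_true (eflip e12) (by unfold wheel4; rw [SimpleGraph.fromRel_adj]; decide)
    | exact iff_of_true (eflip e23) (by unfold wheel4; rw [SimpleGraph.fromRel_adj]; decide)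
    | exact iff_of_true (eflip e30) (by unfold wheel4; rw [SimpleGraph.fromRel_adj]; decide)
    | exact iff_of_true (eflip e40) (by unfold wheel4; rw [SimpleGraph.fromRel_adj]; decide)
    | exact iff_of_true (eflip e41) (by unfold wheel4; rw [SimpleGraph.fromRel_adj]; decide)
    | exact iff_of_true (eflip e42) (by unfold wheel4; rw [SimpleGraph.fromRel_adj]; decide)
    | exact iff_of_true (eflip e43) (by unfold wheel4; rw [SimpleGraph.fromRel_adj]; decide)
    | exact iff_of_false n02 (by unfold wheel4; rw [SimpleGraph.fromRel_adj]; decide)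
    | exact iff_of_false n20 (by unfold wheel4; rw [SimpleGraph.fromRel_adj]; decide)
    | exact iff_of_false n13 (by unfold wheel4; rw [SimpleGraph.fromRel_adj]; decide)
    | exact iff_of_false n31 (by unfold wheel4; rw [SimpleGraph.fromRel_adj]; decide)


/-- A model of the complete graph `K_p` in `G`. -/
structure KModel (G : SimpleGraph V) (p : ℕ) (X : Fin p → Set V) : Prop where
  disj : ∀ i j, i ≠ j → Disjoint (X i) (X j)
  conn : ∀ i, (G.induce (X i)).Connected
  adj : ∀ i j, i ≠ j → ∃ a ∈ X i, ∃ b ∈ X j, G.Adj a b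

noncomputable def MSize {p : ℕ} (X : Fin p → Set V) : ℕ := ∑ i, (X i).ncard

variable {p : ℕ} {X : Fin p → Set V}

lemma bag_nonempty (hM : KModel G p X) (i : Fin p) : (X i).Nonempty := by
  obtain ⟨⟨v, hv⟩⟩ := (hM.conn i).nonempty
  exact ⟨v, hv⟩

/-- Minimality: a connected subset of a bag touched by all other bags must be the whole bag. -/
lemma shrink [Fintype V] (hM : KModel G p X)
    (hmin : ∀ Y : Fin p → Set V, KModel G p Y → MSize X ≤ MSize Y)
    (i₀ : Fin p) (S : Set V) (hS : S ⊆ X i₀) (hSne : S.Nonempty)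
    (hSconn : (G.induce S).Connected)
    (hedge : ∀ j, j ≠ i₀ → ∃ a ∈ X j, ∃ b ∈ S, G.Adj a b) :
    S = X i₀ := by
  by_contra hne
  set Y : Fin p → Set V := Function.update X i₀ S with hY
  have hYj : ∀ j, j ≠ i₀ → Y j = X j := fun j hj => Function.update_of_ne hj _ _
  have hYi : Y i₀ = S := Function.update_self _ _ _
  have hMY : KModel G p Y := by
    refine ⟨?_, ?_, ?_⟩
    · intro i j hij
      rcases eq_or_ne i i₀ with rfl | hi
      · rw [hYi, hYj j hij.symm]
        exact (hM.disj _ _ hij).mono_left hS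
      · rcases eq_or_ne j i₀ with rfl | hj
        · rw [hYi, hYj i hi]
          exact (hM.disj _ _ hij).mono_right hS
        · rw [hYj i hi, hYj j hj]; exact hM.disj _ _ hij
    · intro i
      rcases eq_or_ne i i₀ with rfl | hi
      · rw [hYi]; exact hSconn
      · rw [hYj i hi]; exact hM.conn i
    · intro i j hij
      rcases eq_or_ne i i₀ with rfl | hi
      · rw [hYi, hYj j hij.symm]
        obtain ⟨a, ha, b, hb, hab⟩ := hedge j hij.symm
        exact ⟨b, hb, a, ha, hab.symm⟩
      · rcases eq_or_ne j i₀ with rfl | hj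
        · rw [hYi, hYj i hi]
          exact hedge i hi
        · rw [hYj i hi, hYj j hj]; exact hM.adj i j hij
  have hlt : MSize Y < MSize X := by
    unfold MSize
    apply Finset.sum_lt_sum
    · intro i _
      rcases eq_or_ne i i₀ with rfl | hi
      · rw [hYi]; exact Set.ncard_le_ncard hS (Set.toFinite _)
      · rw [hYj i hi]
    · refine ⟨i₀, Finset.mem_univ i₀, ?_⟩
      rw [hYi]
      exact Set.ncard_lt_ncard (ssubset_of_subset_of_ne hS hne) (Set.toFinite _)
  exact absurd (hmin Y hMY) (by omega)

variable [Fintype V]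

/-- If some bag `r` attaches to both sides of a split of bag `i₀`, we get a `W₄` induced minor,
contradiction. -/
lemma splitW4_Z (hM : KModel G p X)
    (hmin : ∀ Y : Fin p → Set V, KModel G p Y → MSize X ≤ MSize Y)
    (hW4 : ¬ HasInducedMinor G wheel4)
    (i₀ : Fin p) (A : Set V) (hA : A ⊆ X i₀) (hAne : A.Nonempty) (hA'ne : (X i₀ \ A).Nonempty)
    (hAconn : (G.induce A).Connected) (hA'conn : (G.induce (X i₀ \ A)).Connected)
    (r : Fin p) (hr : r ≠ i₀)
    (hrA : ∃ a ∈ X r, ∃ b ∈ A, G.Adj a b)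
    (hrA' : ∃ a ∈ X r, ∃ b ∈ X i₀ \ A, G.Adj a b) : False := by
  set A' := X i₀ \ A with hA'def
  have hPex : ∃ P, P ≠ i₀ ∧ ¬ ∃ a ∈ X P, ∃ b ∈ A', G.Adj a b := by
    by_contra hc
    push_neg at hc
    have heq := shrink hM hmin i₀ A' Set.diff_subset hA'ne hA'conn fun j hj =>
      (hc j hj : ∃ a ∈ X j, ∃ b ∈ A', G.Adj a b)
    obtain ⟨a, ha⟩ := hAne
    exact (heq ▸ (hA ha) : a ∈ A').2 ha
  have hQex : ∃ Q, Q ≠ i₀ ∧ ¬ ∃ a ∈ X Q, ∃ b ∈ A, G.Adj a b := by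
    by_contra hc
    push_neg at hc
    have heq := shrink hM hmin i₀ A hA hAne hAconn fun j hj =>
      (hc j hj : ∃ a ∈ X j, ∃ b ∈ A, G.Adj a b)
    obtain ⟨a, ha⟩ := hA'ne
    exact (heq ▸ ha.1 : a ∈ A) |> ha.2
  obtain ⟨P, hPi, hPno⟩ := hPex
  obtain ⟨Q, hQi, hQno⟩ := hQex
  have hPA : ∃ a ∈ X P, ∃ b ∈ A, G.Adj a b := by
    obtain ⟨a, ha, b, hb, hab⟩ := hM.adj P i₀ hPi
    by_cases hbA : b ∈ A
    · exact ⟨a, ha, b, hbA, hab⟩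
    · exact absurd ⟨a, ha, b, ⟨hb, hbA⟩, hab⟩ hPno
  have hQA' : ∃ a ∈ X Q, ∃ b ∈ A', G.Adj a b := by
    obtain ⟨a, ha, b, hb, hab⟩ := hM.adj Q i₀ hQi
    by_cases hbA : b ∈ A
    · exact absurd ⟨a, ha, b, hbA, hab⟩ hQno
    · exact ⟨a, ha, b, ⟨hb, hbA⟩, hab⟩
  have hPQ : P ≠ Q := fun hh => hQno (hh ▸ hPA)
  have hPr : P ≠ r := fun hh => hPno (hh ▸ hrA')
  have hQr : Q ≠ r := fun hh => hQno (hh ▸ hrA)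
  have dAA' : Disjoint A A' := disjoint_sdiff_self_right
  have hA's : A' ⊆ X i₀ := Set.diff_subset
  apply hW4
  apply buildW4 ![A, A', X Q, X P, X r]
  · intro u v huv
    have d2 : Disjoint A (X Q) := (hM.disj i₀ Q hQi.symm).mono_left hA
    have d3 : Disjoint A (X P) := (hM.disj i₀ P hPi.symm).mono_left hA
    have d4 : Disjoint A (X r) := (hM.disj i₀ r hr.symm).mono_left hA
    have d2' : Disjoint A' (X Q) := (hM.disj i₀ Q hQi.symm).mono_left hA's
    have d3' : Disjoint A' (X P) := (hM.disj i₀ P hPi.symm).mono_left hA's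
    have d4' : Disjoint A' (X r) := (hM.disj i₀ r hr.symm).mono_left hA's
    have dQP : Disjoint (X Q) (X P) := hM.disj Q P hPQ.symm
    have dQr : Disjoint (X Q) (X r) := hM.disj Q r hQr
    have dPr : Disjoint (X P) (X r) := hM.disj P r hPr
    fin_cases u <;> fin_cases v <;>
      first
      | exact absurd rfl huv
      | assumption
      | exact dAA'.symm
      | exact d2.symm
      | exact d3.symm
      | exact d4.symm
      | exact d2'.symm
      | exact d3'.symm
      | exact d4'.symm
      | exact dQP.symm
      | exact dQr.symm
      | exact dPr.symm
  · intro u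
    fin_cases u
    · exact hAconn
    · exact hA'conn
    · exact hM.conn Q
    · exact hM.conn P
    · exact hM.conn r
  · exact cross_edge (hM.conn i₀) hA hAne hA'ne
  · exact eflip hQA'
  · exact hM.adj Q P hPQ.symm
  · exact hPA
  · exact hrA
  · exact hrA'
  · exact hM.adj r Q hQr.symm
  · exact hM.adj r P hPr.symm
  · rintro ⟨a, ha, b, hb, hab⟩
    exact hQno ⟨b, hb, a, ha, hab.symm⟩
  · rintro ⟨a, ha, b, hb, hab⟩
    exact hPno ⟨b, hb, a, ha, hab.symm⟩

/-- The attachment of bag `j` inside bag `i` is unique. -/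
lemma att_unique' (hM : KModel G p X)
    (hmin : ∀ Y : Fin p → Set V, KModel G p Y → MSize X ≤ MSize Y)
    (hW4 : ¬ HasInducedMinor G wheel4)
    {i j : Fin p} (hij : j ≠ i) {x y x' y' : V}
    (hx : x ∈ X i) (hy : y ∈ X j) (e : G.Adj x y)
    (hx' : x' ∈ X i) (hy' : y' ∈ X j) (e' : G.Adj x' y') : x = x' := by
  by_contra hxx
  obtain ⟨A, hAS, hxA, hx'A, cA, cA'⟩ := split_sep (hM.conn i) hx hx' hxx
  exact splitW4_Z hM hmin hW4 i A hAS ⟨x, hxA⟩ ⟨x', hx'A⟩ cA cA' j hij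
    ⟨y, hy, x, hxA, e.symm⟩ ⟨y', hy', x', hx'A, e'.symm⟩

variable [Nonempty V]

/-- The vertex of bag `i` to which bag `j` attaches. -/
noncomputable def att (G : SimpleGraph V) (X : Fin p → Set V) (i j : Fin p) : V :=
  Classical.epsilon fun v => v ∈ X i ∧ ∃ y ∈ X j, G.Adj v y

lemma att_spec (hM : KModel G p X) {i j : Fin p} (hij : i ≠ j) :
    att G X i j ∈ X i ∧ ∃ y ∈ X j, G.Adj (att G X i j) y := by
  unfold att
  apply Classical.epsilon_spec (p := fun v => v ∈ X i ∧ ∃ y ∈ X j, G.Adj v y)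
  obtain ⟨a, ha, b, hb, e⟩ := hM.adj i j hij
  exact ⟨a, ha, b, hb, e⟩

lemma att_eq (hM : KModel G p X)
    (hmin : ∀ Y : Fin p → Set V, KModel G p Y → MSize X ≤ MSize Y)
    (hW4 : ¬ HasInducedMinor G wheel4)
    {i j : Fin p} (hij : i ≠ j) {x y : V}
    (hx : x ∈ X i) (hy : y ∈ X j) (e : G.Adj x y) : x = att G X i j := by
  obtain ⟨hmem, y', hy', e'⟩ := att_spec hM hij
  exact att_unique' hM hmin hW4 hij.symm hx hy e hmem hy' e'

lemma att_adj (hM : KModel G p X)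
    (hmin : ∀ Y : Fin p → Set V, KModel G p Y → MSize X ≤ MSize Y)
    (hW4 : ¬ HasInducedMinor G wheel4)
    {i j : Fin p} (hij : i ≠ j) : G.Adj (att G X i j) (att G X j i) := by
  obtain ⟨a, ha, b, hb, e⟩ := hM.adj i j hij
  have h1 := att_eq hM hmin hW4 hij ha hb e
  have h2 := att_eq hM hmin hW4 hij.symm hb ha e.symm
  rw [← h1, ← h2]
  exact e

lemma att_mem (hM : KModel G p X) {i j : Fin p} (hij : i ≠ j) : att G X i j ∈ X i :=
  (att_spec hM hij).1

/-- any edge between two bags goes between the attachment vertices -/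
lemma edge_eq_att (hM : KModel G p X)
    (hmin : ∀ Y : Fin p → Set V, KModel G p Y → MSize X ≤ MSize Y)
    (hW4 : ¬ HasInducedMinor G wheel4)
    {i j : Fin p} (hij : i ≠ j) {x y : V}
    (hx : x ∈ X i) (hy : y ∈ X j) (e : G.Adj x y) :
    x = att G X i j ∧ y = att G X j i :=
  ⟨att_eq hM hmin hW4 hij hx hy e, att_eq hM hmin hW4 hij.symm hy hx e.symm⟩

/-- If two bags attach exclusively to each side of a split, we get a `W₄`, contradiction. -/
lemma splitW4_XY (hM : KModel G p X)
    (hW4 : ¬ HasInducedMinor G wheel4)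
    (i₀ : Fin p) (A : Set V) (hA : A ⊆ X i₀) (hAne : A.Nonempty) (hA'ne : (X i₀ \ A).Nonempty)
    (hAconn : (G.induce A).Connected) (hA'conn : (G.induce (X i₀ \ A)).Connected)
    (j1 j2 k1 k2 : Fin p) (hj1 : j1 ≠ i₀) (hj2 : j2 ≠ i₀) (hk1 : k1 ≠ i₀) (hk2 : k2 ≠ i₀)
    (hj12 : j1 ≠ j2) (hk12 : k1 ≠ k2)
    (hj1A : ∃ a ∈ X j1, ∃ b ∈ A, G.Adj a b)
    (hj1A' : ¬ ∃ a ∈ X j1, ∃ b ∈ X i₀ \ A, G.Adj a b)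
    (hj2A : ∃ a ∈ X j2, ∃ b ∈ A, G.Adj a b)
    (hj2A' : ¬ ∃ a ∈ X j2, ∃ b ∈ X i₀ \ A, G.Adj a b)
    (hk1A' : ∃ a ∈ X k1, ∃ b ∈ X i₀ \ A, G.Adj a b)
    (hk1A : ¬ ∃ a ∈ X k1, ∃ b ∈ A, G.Adj a b)
    (hk2A' : ∃ a ∈ X k2, ∃ b ∈ X i₀ \ A, G.Adj a b)
    (hk2A : ¬ ∃ a ∈ X k2, ∃ b ∈ A, G.Adj a b) : False := by
  have hA's : (X i₀ \ A) ⊆ X i₀ := Set.diff_subset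
  have hjk : ∀ j k : Fin p, (∃ a ∈ X j, ∃ b ∈ A, G.Adj a b) →
      (¬ ∃ a ∈ X k, ∃ b ∈ A, G.Adj a b) → j ≠ k := by
    rintro j k hj hk rfl
    exact hk hj
  have hj1k1 := hjk j1 k1 hj1A hk1A
  have hj1k2 := hjk j1 k2 hj1A hk2A
  have hj2k1 := hjk j2 k1 hj2A hk1A
  have hj2k2 := hjk j2 k2 hj2A hk2A
  have hUconn : (G.induce (X j2 ∪ X k2)).Connected := by
    obtain ⟨a, ha, b, hb, e⟩ := hM.adj j2 k2 hj2k2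
    exact SimpleGraph.connected_induce_union (hM.conn j2).preconnected (hM.conn k2).preconnected ha hb e
  apply hW4
  apply buildW4 ![A, X i₀ \ A, X k1, X j1, X j2 ∪ X k2]
  · intro u v huv
    have dAA' : Disjoint A (X i₀ \ A) := disjoint_sdiff_self_right
    have d2 : Disjoint A (X k1) := (hM.disj i₀ k1 hk1.symm).mono_left hA
    have d3 : Disjoint A (X j1) := (hM.disj i₀ j1 hj1.symm).mono_left hA
    have d4 : Disjoint A (X j2 ∪ X k2) := Set.disjoint_union_right.mpr
      ⟨(hM.disj i₀ j2 hj2.symm).mono_left hA, (hM.disj i₀ k2 hk2.symm).mono_left hA⟩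
    have d2' : Disjoint (X i₀ \ A) (X k1) := (hM.disj i₀ k1 hk1.symm).mono_left hA's
    have d3' : Disjoint (X i₀ \ A) (X j1) := (hM.disj i₀ j1 hj1.symm).mono_left hA's
    have d4' : Disjoint (X i₀ \ A) (X j2 ∪ X k2) := Set.disjoint_union_right.mpr
      ⟨(hM.disj i₀ j2 hj2.symm).mono_left hA's, (hM.disj i₀ k2 hk2.symm).mono_left hA's⟩
    have dKJ : Disjoint (X k1) (X j1) := hM.disj k1 j1 hj1k1.symm
    have dK4 : Disjoint (X k1) (X j2 ∪ X k2) := Set.disjoint_union_right.mpr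
      ⟨hM.disj k1 j2 hj2k1.symm, hM.disj k1 k2 hk12⟩
    have dJ4 : Disjoint (X j1) (X j2 ∪ X k2) := Set.disjoint_union_right.mpr
      ⟨hM.disj j1 j2 hj12, hM.disj j1 k2 hj1k2⟩
    fin_cases u <;> fin_cases v <;>
      first
      | exact absurd rfl huv
      | assumption
      | exact dAA'.symm
      | exact d2.symm
      | exact d3.symm
      | exact d4.symm
      | exact d2'.symm
      | exact d3'.symm
      | exact d4'.symm
      | exact dKJ.symm
      | exact dK4.symm
      | exact dJ4.symm
  · intro u
    fin_cases u
    · exact hAconn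
    · exact hA'conn
    · exact hM.conn k1
    · exact hM.conn j1
    · exact hUconn
  · exact cross_edge (hM.conn i₀) hA hAne hA'ne
  · exact eflip hk1A'
  · exact hM.adj k1 j1 hj1k1.symm
  · exact hj1A
  · obtain ⟨a, ha, b, hb, e⟩ := hj2A
    exact ⟨a, Or.inl ha, b, hb, e⟩
  · obtain ⟨a, ha, b, hb, e⟩ := hk2A'
    exact ⟨a, Or.inr ha, b, hb, e⟩
  · obtain ⟨a, ha, b, hb, e⟩ := hM.adj j2 k1 hj2k1
    exact ⟨a, Or.inl ha, b, hb, e⟩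
  · obtain ⟨a, ha, b, hb, e⟩ := hM.adj k2 j1 hj1k2.symm
    exact ⟨a, Or.inr ha, b, hb, e⟩
  · rintro ⟨a, ha, b, hb, e⟩
    exact hk1A ⟨b, hb, a, ha, e.symm⟩
  · rintro ⟨a, ha, b, hb, e⟩
    exact hj1A' ⟨b, hb, a, ha, e.symm⟩

/-- `v` is a heavy vertex of bag `i`: at least two other bags attach at `v`. -/
def heavy (G : SimpleGraph V) (X : Fin p → Set V) (i : Fin p) (v : V) : Prop :=
  ∃ j k : Fin p, j ≠ k ∧ j ≠ i ∧ k ≠ i ∧ att G X i j = v ∧ att G X i k = v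

lemma att_edge_to (hM : KModel G p X)
    (hmin : ∀ Y : Fin p → Set V, KModel G p Y → MSize X ≤ MSize Y)
    (hW4 : ¬ HasInducedMinor G wheel4)
    {i l : Fin p} (hli : l ≠ i) {A : Set V} (hmem : att G X i l ∈ A) :
    ∃ a ∈ X l, ∃ b ∈ A, G.Adj a b :=
  ⟨att G X l i, att_mem hM hli, att G X i l, hmem, att_adj hM hmin hW4 hli⟩

lemma att_no_edge_to (hM : KModel G p X)
    (hmin : ∀ Y : Fin p → Set V, KModel G p Y → MSize X ≤ MSize Y)
    (hW4 : ¬ HasInducedMinor G wheel4)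
    {i l : Fin p} (hli : l ≠ i) {A : Set V} (hA : A ⊆ X i) (hnmem : att G X i l ∉ A) :
    ¬ ∃ a ∈ X l, ∃ b ∈ A, G.Adj a b := by
  rintro ⟨a, ha, b, hb, e⟩
  obtain ⟨h1, h2⟩ := edge_eq_att hM hmin hW4 hli ha (hA hb) e
  exact hnmem (h2 ▸ hb)

/-- a bag has at most one heavy vertex -/
lemma heavy_not_two (hM : KModel G p X)
    (hmin : ∀ Y : Fin p → Set V, KModel G p Y → MSize X ≤ MSize Y)
    (hW4 : ¬ HasInducedMinor G wheel4)
    (i : Fin p) {v v' : V} (hv : v ∈ X i) (hv' : v' ∈ X i) (hne : v ≠ v')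
    (h1 : heavy G X i v) (h2 : heavy G X i v') : False := by
  obtain ⟨A, hAS, hvA, hv'A, cA, cA'⟩ := split_sep (hM.conn i) hv hv' hne
  obtain ⟨j1, j2, hj12, hj1i, hj2i, hj1v, hj2v⟩ := h1
  obtain ⟨k1, k2, hk12, hk1i, hk2i, hk1v, hk2v⟩ := h2
  have dAA' : Disjoint A (X i \ A) := disjoint_sdiff_self_right
  refine splitW4_XY hM hW4 i A hAS ⟨v, hvA⟩ ⟨v', hv'A⟩ cA cA' j1 j2 k1 k2 hj1i hj2i hk1i hk2i
    hj12 hk12 ?_ ?_ ?_ ?_ ?_ ?_ ?_ ?_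
  · exact att_edge_to hM hmin hW4 hj1i (hj1v ▸ hvA)
  · exact att_no_edge_to hM hmin hW4 hj1i Set.diff_subset
      (fun hh => (hh.2 (hj1v ▸ hvA)).elim)
  · exact att_edge_to hM hmin hW4 hj2i (hj2v ▸ hvA)
  · exact att_no_edge_to hM hmin hW4 hj2i Set.diff_subset
      (fun hh => (hh.2 (hj2v ▸ hvA)).elim)
  · exact att_edge_to hM hmin hW4 hk1i (hk1v ▸ hv'A)
  · exact att_no_edge_to hM hmin hW4 hk1i hAS
      (fun hh => ((hk1v ▸ hv'A).2 hh).elim)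
  · exact att_edge_to hM hmin hW4 hk2i (hk2v ▸ hv'A)
  · exact att_no_edge_to hM hmin hW4 hk2i hAS
      (fun hh => ((hk2v ▸ hv'A).2 hh).elim)

/-- every removable vertex has an attacher -/
lemma attacher_exists (hM : KModel G p X)
    (hmin : ∀ Y : Fin p → Set V, KModel G p Y → MSize X ≤ MSize Y)
    (hW4 : ¬ HasInducedMinor G wheel4)
    (i : Fin p) {v : V} (hv : v ∈ X i)
    (hconn' : (G.induce (X i \ {v})).Connected) (hne' : (X i \ {v}).Nonempty) :
    ∃ j, j ≠ i ∧ att G X i j = v := by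
  by_contra hc
  push_neg at hc
  have heq := shrink hM hmin i (X i \ {v}) Set.diff_subset hne' hconn' (fun j hj =>
    ⟨att G X j i, att_mem hM hj, att G X i j, ⟨att_mem hM (Ne.symm hj), by
      simpa using hc j hj⟩, att_adj hM hmin hW4 hj⟩)
  rw [← heq] at hv
  exact hv.2 rfl

/-- at most one bag attaches away from a heavy removable vertex -/
lemma off_heavy_unique (hM : KModel G p X)
    (hmin : ∀ Y : Fin p → Set V, KModel G p Y → MSize X ≤ MSize Y)
    (hW4 : ¬ HasInducedMinor G wheel4)
    (i : Fin p) {v : V} (hv : v ∈ X i)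
    (hconn' : (G.induce (X i \ {v})).Connected) (hne' : (X i \ {v}).Nonempty)
    (hheavy : heavy G X i v) {l m : Fin p} (hl : l ≠ i) (hm : m ≠ i) (hlm : l ≠ m)
    (hal : att G X i l ≠ v) (ham : att G X i m ≠ v) : False := by
  obtain ⟨j1, j2, hj12, hj1i, hj2i, hj1v, hj2v⟩ := hheavy
  have hsub : ({v} : Set V) ⊆ X i := by simpa using hv
  have hAl : att G X i l ∈ X i \ {v} := ⟨att_mem hM (Ne.symm hl), by simpa using hal⟩
  have hAm : att G X i m ∈ X i \ {v} := ⟨att_mem hM (Ne.symm hm), by simpa using ham⟩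
  have hXv : X i \ ({v} : Set V) = X i \ {v} := rfl
  refine splitW4_XY hM hW4 i {v} hsub ⟨v, rfl⟩ hne' (conn_singleton G v) hconn'
    j1 j2 l m hj1i hj2i hl hm hj12 hlm ?_ ?_ ?_ ?_ ?_ ?_ ?_ ?_
  · exact att_edge_to hM hmin hW4 hj1i (by simpa using hj1v)
  · exact att_no_edge_to hM hmin hW4 hj1i Set.diff_subset
      (fun hh => hh.2 (by simpa using hj1v))
  · exact att_edge_to hM hmin hW4 hj2i (by simpa using hj2v)
  · exact att_no_edge_to hM hmin hW4 hj2i Set.diff_subset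
      (fun hh => hh.2 (by simpa using hj2v))
  · exact att_edge_to hM hmin hW4 hl hAl
  · exact att_no_edge_to hM hmin hW4 hl hsub (fun hh => hal (by simpa using hh))
  · exact att_edge_to hM hmin hW4 hm hAm
  · exact att_no_edge_to hM hmin hW4 hm hsub (fun hh => ham (by simpa using hh))

/-- a non-heavy vertex has at most one attacher -/
lemma nonheavy_att_unique {i : Fin p} {v : V} (hnh : ¬ heavy G X i v)
    {j k : Fin p} (hj : j ≠ i) (hk : k ≠ i) (haj : att G X i j = v) (hak : att G X i k = v) :
    j = k := by
  by_contra hjk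
  exact hnh ⟨j, k, hjk, hj, hk, haj, hak⟩

/-- a nontrivial bag has two distinct removable vertices -/
lemma two_removables (hM : KModel G p X) (i : Fin p) (hnt : (X i).Nontrivial) :
    ∃ v₁ v₂, v₁ ≠ v₂ ∧
      (v₁ ∈ X i ∧ (G.induce (X i \ {v₁})).Connected) ∧
      (v₂ ∈ X i ∧ (G.induce (X i \ {v₂})).Connected) := by
  obtain ⟨x, hx, y, hy, hxy⟩ := hnt
  obtain ⟨v₁, hv₁S, _, hc₁⟩ := exists_removable (hM.conn i) hx hy (Ne.symm hxy)
  obtain ⟨w, hw, hwv⟩ : ∃ w ∈ X i, w ≠ v₁ := by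
    rcases eq_or_ne x v₁ with rfl | hne
    · exact ⟨y, hy, Ne.symm hxy⟩
    · exact ⟨x, hx, hne⟩
  obtain ⟨v₂, hv₂S, hv₂v₁, hc₂⟩ := exists_removable (hM.conn i) hv₁S hw hwv
  exact ⟨v₂, v₁, hv₂v₁, ⟨hv₂S, hc₂⟩, ⟨hv₁S, hc₁⟩⟩

/-- helper: there is an index outside any four given ones when `p ≥ 5` -/
lemma pick5 (hp : 5 ≤ p) (a b c d : Fin p) : ∃ j : Fin p, j ≠ a ∧ j ≠ b ∧ j ≠ c ∧ j ≠ d := by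
  classical
  by_contra hc
  push_neg at hc
  have hsub : (Finset.univ : Finset (Fin p)) ⊆ {a, b, c, d} := by
    intro x _
    rcases Classical.em (x = a) with rfl | hxa
    · simp
    rcases Classical.em (x = b) with rfl | hxb
    · simp
    rcases Classical.em (x = c) with rfl | hxc
    · simp
    have := hc x hxa hxb hxc
    simp [this]
  have h1 := Finset.card_le_card hsub
  have h2 : ({a, b, c, d} : Finset (Fin p)).card ≤ 4 := by
    apply le_trans (Finset.card_insert_le _ _)
    apply Nat.succ_le_succ
    apply le_trans (Finset.card_insert_le _ _)
    apply Nat.succ_le_succ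
    apply le_trans (Finset.card_insert_le _ _)
    apply Nat.succ_le_succ
    simp
  rw [Finset.card_univ, Fintype.card_fin] at h1
  omega

/-- the key two-bag `W₄` construction -/
lemma pairW4 (hM : KModel G p X)
    (hmin : ∀ Y : Fin p → Set V, KModel G p Y → MSize X ≤ MSize Y)
    (hW4 : ¬ HasInducedMinor G wheel4) (hp : 5 ≤ p)
    {B C D E : Fin p} {u u' : V}
    (hBC : B ≠ C) (hDB : D ≠ B) (hDC : D ≠ C) (hDE : D ≠ E) (hEB : E ≠ B) (hEC : E ≠ C)
    (huB : u ∈ X B) (hcB : (G.induce (X B \ {u})).Connected)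
    (huC : u' ∈ X C) (hcC : (G.induce (X C \ {u'})).Connected)
    (huniqB : ∀ l, l ≠ B → l ≠ D → att G X B l ≠ u)
    (huniqC : ∀ l, l ≠ C → l ≠ E → att G X C l ≠ u')
    (hattD : att G X B D = u) (hattE : att G X C E = u') : False := by
  obtain ⟨J, hJB, hJC, hJD, hJE⟩ := pick5 hp B C D E
  apply hW4
  apply buildW4 ![X B \ {u}, X C \ {u'}, X D, X E, X J]
  · intro x y hxy
    have d01 : Disjoint (X B \ {u}) (X C \ {u'}) :=
      (hM.disj B C hBC).mono Set.diff_subset Set.diff_subset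
    have d02 : Disjoint (X B \ {u}) (X D) := (hM.disj B D hDB.symm).mono_left Set.diff_subset
    have d03 : Disjoint (X B \ {u}) (X E) := (hM.disj B E hEB.symm).mono_left Set.diff_subset
    have d04 : Disjoint (X B \ {u}) (X J) := (hM.disj B J hJB.symm).mono_left Set.diff_subset
    have d12 : Disjoint (X C \ {u'}) (X D) := (hM.disj C D hDC.symm).mono_left Set.diff_subset
    have d13 : Disjoint (X C \ {u'}) (X E) := (hM.disj C E hEC.symm).mono_left Set.diff_subset
    have d14 : Disjoint (X C \ {u'}) (X J) := (hM.disj C J hJC.symm).mono_left Set.diff_subset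
    have d23 : Disjoint (X D) (X E) := hM.disj D E hDE
    have d24 : Disjoint (X D) (X J) := hM.disj D J hJD.symm
    have d34 : Disjoint (X E) (X J) := hM.disj E J hJE.symm
    fin_cases x <;> fin_cases y <;>
      first
      | exact absurd rfl hxy
      | assumption
      | exact d01.symm
      | exact d02.symm
      | exact d03.symm
      | exact d04.symm
      | exact d12.symm
      | exact d13.symm
      | exact d14.symm
      | exact d23.symm
      | exact d24.symm
      | exact d34.symm
  · intro x
    fin_cases x
    · exact hcB
    · exact hcC
    · exact hM.conn D
    · exact hM.conn E
    · exact hM.conn J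
  · exact ⟨att G X B C, ⟨att_mem hM hBC, huniqB C hBC.symm hDC.symm⟩,
      att G X C B, ⟨att_mem hM hBC.symm, huniqC B hBC hEB.symm⟩, att_adj hM hmin hW4 hBC⟩
  · exact ⟨att G X C D, ⟨att_mem hM hDC.symm, huniqC D hDC hDE⟩,
      att G X D C, att_mem hM hDC, att_adj hM hmin hW4 hDC.symm⟩
  · exact hM.adj D E hDE
  · exact ⟨att G X E B, att_mem hM hEB, att G X B E,
      ⟨att_mem hM hEB.symm, huniqB E hEB hDE.symm⟩, att_adj hM hmin hW4 hEB⟩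
  · exact ⟨att G X J B, att_mem hM hJB, att G X B J,
      ⟨att_mem hM hJB.symm, huniqB J hJB hJD⟩, att_adj hM hmin hW4 hJB⟩
  · exact ⟨att G X J C, att_mem hM hJC, att G X C J,
      ⟨att_mem hM hJC.symm, huniqC J hJC hJE⟩, att_adj hM hmin hW4 hJC⟩
  · exact hM.adj J D hJD
  · exact hM.adj J E hJE
  · rintro ⟨a, ha, b, hb, e⟩
    have := (edge_eq_att hM hmin hW4 hDB.symm ha.1 (hb : b ∈ X D) e).1
    rw [hattD] at this
    exact ha.2 this
  · rintro ⟨a, ha, b, hb, e⟩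
    have := (edge_eq_att hM hmin hW4 hEC.symm ha.1 (hb : b ∈ X E) e).1
    rw [hattE] at this
    exact ha.2 this

lemma diff_nonempty_of_nontrivial {i : Fin p} (hnt : (X i).Nontrivial) (v : V) :
    (X i \ {v}).Nonempty := by
  obtain ⟨a, ha, b, hb, hab⟩ := hnt
  rcases eq_or_ne a v with rfl | hav
  · exact ⟨b, hb, fun hh => hab (by simpa using hh.symm)⟩
  · exact ⟨a, ha, by simpa using hav⟩

lemma singleton_bag (hM : KModel G p X) {j : Fin p} (h : ¬ (X j).Nontrivial)
    {T : Finset (Fin p)} :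
    ∃ x ∈ X j, ∀ i, i ∉ T → i ≠ j → att G X j i = x := by
  obtain ⟨v, hv⟩ := bag_nonempty hM j
  have hsing : X j = {v} := (Set.not_nontrivial_iff.mp h).eq_singleton_of_mem hv
  refine ⟨v, hv, fun i _ hij => ?_⟩
  have := att_mem hM (Ne.symm hij) (j := i)
  rw [hsing] at this
  simpa using this

/-- The heart of the argument: outside a set `T` of at most 3 bags, all attachments inside each
bag happen at a common vertex. -/
lemma key_T (hM : KModel G p X)
    (hmin : ∀ Y : Fin p → Set V, KModel G p Y → MSize X ≤ MSize Y)
    (hW4 : ¬ HasInducedMinor G wheel4) (hp : 7 ≤ p) :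
    ∃ T : Finset (Fin p), T.card ≤ 3 ∧
      ∀ j ∉ T, ∃ x ∈ X j, ∀ i, i ∉ T → i ≠ j → att G X j i = x := by
  have hp5 : 5 ≤ p := by omega
  by_cases hI : ∃ B, (X B).Nontrivial ∧ ∃ u₁ u₂, u₁ ≠ u₂ ∧
      (u₁ ∈ X B ∧ (G.induce (X B \ {u₁})).Connected ∧ ¬ heavy G X B u₁) ∧
      (u₂ ∈ X B ∧ (G.induce (X B \ {u₂})).Connected ∧ ¬ heavy G X B u₂)
  · -- CASE I
    obtain ⟨B, hBnt, u₁, u₂, h12, ⟨hu₁, hc₁, hnh₁⟩, ⟨hu₂, hc₂, hnh₂⟩⟩ := hI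
    obtain ⟨D₁, hD₁B, hD₁v⟩ := attacher_exists hM hmin hW4 B hu₁ hc₁
      (diff_nonempty_of_nontrivial hBnt u₁)
    obtain ⟨D₂, hD₂B, hD₂v⟩ := attacher_exists hM hmin hW4 B hu₂ hc₂
      (diff_nonempty_of_nontrivial hBnt u₂)
    have hD12 : D₁ ≠ D₂ := by
      rintro rfl
      exact h12 (hD₁v ▸ hD₂v)
    refine ⟨{B, D₁, D₂}, ?_, ?_⟩
    · apply le_trans (Finset.card_insert_le _ _)
      apply Nat.succ_le_succ
      apply le_trans (Finset.card_insert_le _ _)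
      apply Nat.succ_le_succ
      simp
    intro j hjT
    simp only [Finset.mem_insert, Finset.mem_singleton, not_or] at hjT
    obtain ⟨hjB, hjD₁, hjD₂⟩ := hjT
    by_cases hjnt : (X j).Nontrivial
    · -- claim (a): every non-heavy removable vertex of `j` is attached by `B`
      have claimA : ∀ v, v ∈ X j → (G.induce (X j \ {v})).Connected → ¬ heavy G X j v →
          att G X j B = v := by
        intro v hv hcv hnhv
        obtain ⟨E, hEj, hEv⟩ := attacher_exists hM hmin hW4 j hv hcv
          (diff_nonempty_of_nontrivial hjnt v)
        by_cases hEB : E = B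
        · rwa [hEB] at hEv
        · exfalso
          have huniqC : ∀ l, l ≠ j → l ≠ E → att G X j l ≠ v := by
            intro l hl hlE hav
            exact hlE (nonheavy_att_unique hnhv hl hEj hav hEv)
          by_cases hD1E : D₁ = E
          · -- use u₂ and D₂
            have hD2E : D₂ ≠ E := fun hh => hD12 (hD1E.trans hh.symm)
            refine pairW4 hM hmin hW4 hp5 (B := B) (C := j) (D := D₂) (E := E)
              (Ne.symm hjB) hD₂B (Ne.symm hjD₂) hD2E hEB hEj hu₂ hc₂ hv hcv
              ?_ huniqC hD₂v hEv
            intro l hl hlD hav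
            exact hlD (nonheavy_att_unique hnh₂ hl hD₂B hav hD₂v)
          · refine pairW4 hM hmin hW4 hp5 (B := B) (C := j) (D := D₁) (E := E)
              (Ne.symm hjB) hD₁B (Ne.symm hjD₁) hD1E hEB hEj hu₁ hc₁ hv hcv
              ?_ huniqC hD₁v hEv
            intro l hl hlD hav
            exact hlD (nonheavy_att_unique hnh₁ hl hD₁B hav hD₁v)
      obtain ⟨v₁, v₂, hv12, ⟨hv₁, hcv₁⟩, ⟨hv₂, hcv₂⟩⟩ := two_removables hM j hjnt
      have finish : ∀ hv a : V, hv ≠ a → hv ∈ X j →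
          (G.induce (X j \ {hv})).Connected → heavy G X j hv → att G X j B = a →
          ∃ x ∈ X j, ∀ i, i ∉ ({B, D₁, D₂} : Finset (Fin p)) → i ≠ j → att G X j i = x := by
        intro hv a hha hmemv hch hhv hatB
        refine ⟨hv, hmemv, ?_⟩
        intro i hiT hij
        simp only [Finset.mem_insert, Finset.mem_singleton, not_or] at hiT
        by_contra hne
        exact off_heavy_unique hM hmin hW4 j hmemv hch
          (diff_nonempty_of_nontrivial hjnt hv) hhv (l := B) (m := i)
          (Ne.symm hjB) hij (fun hh => hiT.1 hh.symm) (hatB ▸ (Ne.symm hha)) hne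
      by_cases hh₁ : heavy G X j v₁ <;> by_cases hh₂ : heavy G X j v₂
      · exact absurd (heavy_not_two hM hmin hW4 j hv₁ hv₂ hv12 hh₁ hh₂) (fun h => h)
      · exact finish v₁ v₂ hv12 hv₁ hcv₁ hh₁ (claimA v₂ hv₂ hcv₂ hh₂)
      · exact finish v₂ v₁ (Ne.symm hv12) hv₂ hcv₂ hh₂ (claimA v₁ hv₁ hcv₁ hh₁)
      · exact absurd ((claimA v₁ hv₁ hcv₁ hh₁).symm.trans (claimA v₂ hv₂ hcv₂ hh₂)) hv12
    · exact singleton_bag hM hjnt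
  · -- CASE II
    -- structure of each nontrivial bag
    have struct : ∀ i, (X i).Nontrivial → ∃ hv uu gg, gg ≠ i ∧ uu ∈ X i ∧
        (G.induce (X i \ {uu})).Connected ∧ ¬ heavy G X i uu ∧ att G X i gg = uu ∧
        hv ∈ X i ∧ (∀ l, l ≠ i → l ≠ gg → att G X i l = hv) := by
      intro i hint
      obtain ⟨v₁, v₂, hv12, ⟨hv₁, hcv₁⟩, ⟨hv₂, hcv₂⟩⟩ := two_removables hM i hint
      have hone : (heavy G X i v₁ ∧ ¬ heavy G X i v₂) ∨ (heavy G X i v₂ ∧ ¬ heavy G X i v₁) := by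
        by_cases hh₁ : heavy G X i v₁ <;> by_cases hh₂ : heavy G X i v₂
        · exact absurd (heavy_not_two hM hmin hW4 i hv₁ hv₂ hv12 hh₁ hh₂) (fun h => h)
        · exact Or.inl ⟨hh₁, hh₂⟩
        · exact Or.inr ⟨hh₂, hh₁⟩
        · exact absurd ⟨i, hint, v₁, v₂, hv12, ⟨hv₁, hcv₁, hh₁⟩, ⟨hv₂, hcv₂, hh₂⟩⟩ hI
      have core : ∀ hv uu : V, hv ≠ uu → hv ∈ X i → uu ∈ X i →
          (G.induce (X i \ {hv})).Connected → (G.induce (X i \ {uu})).Connected →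
          heavy G X i hv → ¬ heavy G X i uu →
          ∃ hv' uu' gg, gg ≠ i ∧ uu' ∈ X i ∧
          (G.induce (X i \ {uu'})).Connected ∧ ¬ heavy G X i uu' ∧ att G X i gg = uu' ∧
          hv' ∈ X i ∧ (∀ l, l ≠ i → l ≠ gg → att G X i l = hv') := by
        intro hv uu hne hmh hmu hch hcu hh hnu
        obtain ⟨gg, hggi, hggv⟩ := attacher_exists hM hmin hW4 i hmu hcu
          (diff_nonempty_of_nontrivial hint uu)
        refine ⟨hv, uu, gg, hggi, hmu, hcu, hnu, hggv, hmh, ?_⟩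
        intro l hl hlg
        by_contra hla
        exact off_heavy_unique hM hmin hW4 i hmh hch
          (diff_nonempty_of_nontrivial hint hv) hh (l := gg) (m := l)
          hggi hl (Ne.symm hlg) (hggv ▸ (Ne.symm hne)) hla
      rcases hone with ⟨hh, hnh⟩ | ⟨hh, hnh⟩
      · exact core v₁ v₂ hv12 hv₁ hv₂ hcv₁ hcv₂ hh hnh
      · exact core v₂ v₁ (Ne.symm hv12) hv₂ hv₁ hcv₂ hcv₁ hh hnh
    choose hfun ufun gfun hgne humem hucon hunh hgatt hhmem hall using struct
    -- pair condition
    have pairCond : ∀ i j (hi : (X i).Nontrivial) (hj : (X j).Nontrivial), i ≠ j →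
        gfun i hi = j ∨ gfun j hj = i ∨ gfun i hi = gfun j hj := by
      intro i j hi hj hij
      by_contra hc
      push_neg at hc
      obtain ⟨h1, h2, h3⟩ := hc
      refine pairW4 hM hmin hW4 hp5 (B := i) (C := j) (D := gfun i hi) (E := gfun j hj)
        hij (hgne i hi) h1 h3 h2 (hgne j hj) (humem i hi) (hucon i hi)
        (humem j hj) (hucon j hj) ?_ ?_ (hgatt i hi) (hgatt j hj)
      · intro l hl hlg hav
        exact hlg (nonheavy_att_unique (hunh i hi) hl (hgne i hi) hav (hgatt i hi))
      · intro l hl hlg hav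
        exact hlg (nonheavy_att_unique (hunh j hj) hl (hgne j hj) hav (hgatt j hj))
    by_cases hEx : ∃ i j, ∃ (hi : (X i).Nontrivial) (hj : (X j).Nontrivial),
        i ≠ j ∧ gfun i hi = j
    · obtain ⟨i, j, hi, hj, hij, hgij⟩ := hEx
      refine ⟨{i, j}, ?_, ?_⟩
      · apply le_trans (Finset.card_insert_le _ _)
        simp
      intro k hkT
      simp only [Finset.mem_insert, Finset.mem_singleton, not_or] at hkT
      obtain ⟨hki, hkj⟩ := hkT
      by_cases hknt : (X k).Nontrivial
      · have hgk : gfun k hknt = i ∨ gfun k hknt = j := by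
          rcases pairCond i k hi hknt (Ne.symm hki) with hc | hc | hc
          · exact absurd (hgij ▸ hc : j = k) (Ne.symm hkj)
          · exact Or.inl hc
          · exact Or.inr (hc.symm.trans hgij)
        refine ⟨hfun k hknt, hhmem k hknt, ?_⟩
        intro l hlT hlk
        simp only [Finset.mem_insert, Finset.mem_singleton, not_or] at hlT
        refine hall k hknt l hlk ?_
        rcases hgk with hc | hc <;> rw [hc]
        · exact fun hh => hlT.1 hh
        · exact fun hh => hlT.2 hh
      · exact singleton_bag hM hknt
    · by_cases hNS : ∃ i, (X i).Nontrivial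
      · obtain ⟨i₀, hi₀⟩ := hNS
        refine ⟨{gfun i₀ hi₀}, by simp, ?_⟩
        intro j hjT
        simp only [Finset.mem_singleton] at hjT
        by_cases hjnt : (X j).Nontrivial
        · have hgj : gfun j hjnt = gfun i₀ hi₀ := by
            rcases eq_or_ne j i₀ with rfl | hne
            · rfl
            · rcases pairCond i₀ j hi₀ hjnt (Ne.symm hne) with hc | hc | hc
              · exact absurd ⟨i₀, j, hi₀, hjnt, Ne.symm hne, hc⟩ hEx
              · exact absurd ⟨j, i₀, hjnt, hi₀, hne, hc⟩ hEx
              · exact hc.symm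
          refine ⟨hfun j hjnt, hhmem j hjnt, ?_⟩
          intro l hlT hlj
          simp only [Finset.mem_singleton] at hlT
          exact hall j hjnt l hlj (fun hh => hlT (hh.symm ▸ hgj ▸ rfl))
        · exact singleton_bag hM hjnt
      · refine ⟨∅, by simp, ?_⟩
        intro j _
        by_cases hjnt : (X j).Nontrivial
        · exact absurd ⟨j, hjnt⟩ hNS
        · exact singleton_bag hM hjnt

lemma main_bound (hM : KModel G p X)
    (hmin : ∀ Y : Fin p → Set V, KModel G p Y → MSize X ≤ MSize Y)
    (hW4 : ¬ HasInducedMinor G wheel4) : p ≤ G.cliqueNum + 5 := by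
  classical
  by_contra hc
  push_neg at hc
  have hω : 1 ≤ G.cliqueNum := by
    obtain ⟨v⟩ := ‹Nonempty V›
    have hcl : G.IsClique ({v} : Finset V) := by
      simp [SimpleGraph.IsClique]
    have := SimpleGraph.IsClique.card_le_cliqueNum (tc := hcl)
    simpa using this
  have hp7 : 7 ≤ p := by omega
  obtain ⟨T, hTcard, hT⟩ := key_T hM hmin hW4 hp7
  choose ξ hξmem hξatt using hT
  set F := (Finset.univ \ T).attach with hF
  have hmemF : ∀ j : {x // x ∈ Finset.univ \ T}, j.1 ∉ T := by
    intro j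
    have := j.2
    rw [Finset.mem_sdiff] at this
    exact this.2
  set t : Finset V := F.image (fun j => ξ j.1 (hmemF j)) with ht
  have hinj : Set.InjOn (fun j : {x // x ∈ Finset.univ \ T} => ξ j.1 (hmemF j)) F := by
    intro a _ b _ hab
    by_contra hne
    have hne' : a.1 ≠ b.1 := fun hh => hne (Subtype.ext hh)
    have d := hM.disj a.1 b.1 hne'
    exact (d.ne_of_mem (hξmem a.1 (hmemF a)) (hξmem b.1 (hmemF b))) hab
  have hcardt : t.card = p - T.card := by
    rw [ht, Finset.card_image_of_injOn hinj, hF, Finset.card_attach, Finset.card_sdiff_of_subset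
      (Finset.subset_univ T), Finset.card_univ, Fintype.card_fin]
  have hclique : G.IsClique (t : Set V) := by
    intro x hx y hy hxy
    simp only [ht, Finset.coe_image, Set.mem_image, Finset.mem_coe] at hx hy
    obtain ⟨a, ha, rfl⟩ := hx
    obtain ⟨b, hb, rfl⟩ := hy
    have hab : a.1 ≠ b.1 := by
      rintro hh
      exact hxy (by rw [show a = b from Subtype.ext hh])
    have h1 : att G X a.1 b.1 = ξ a.1 (hmemF a) := hξatt a.1 (hmemF a) b.1 (hmemF b) hab.symm
    have h2 : att G X b.1 a.1 = ξ b.1 (hmemF b) := hξatt b.1 (hmemF b) a.1 (hmemF a) hab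
    have := att_adj hM hmin hW4 hab
    rwa [h1, h2] at this
  have hle := SimpleGraph.IsClique.card_le_cliqueNum (tc := hclique)
  omega

omit [Nonempty V] in
theorem hadwiger_bound_final (G : SimpleGraph V) [Fintype V]
    (h : ¬ HasInducedMinor G wheel4) {q : ℕ} (X : Fin q → Set V)
    (hdisj : ∀ u v, u ≠ v → Disjoint (X u) (X v))
    (hconn : ∀ u, (G.induce (X u)).Connected)
    (hadj : ∀ ⦃u v⦄, (⊤ : SimpleGraph (Fin q)).Adj u v → ∃ a ∈ X u, ∃ b ∈ X v, G.Adj a b) :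
    q ≤ G.cliqueNum + 5 := by
  rcases le_or_gt q 5 with hq | hq
  · omega
  have hq1 : 0 < q := by omega
  have hKM : KModel G q X := ⟨hdisj, hconn, fun i j hij => hadj (by simpa using hij)⟩
  obtain ⟨v, hv⟩ := bag_nonempty hKM ⟨0, hq1⟩
  haveI : Nonempty V := ⟨v⟩
  have hSne : {n | ∃ Y, KModel G q Y ∧ MSize Y = n}.Nonempty := ⟨MSize X, X, hKM, rfl⟩
  obtain ⟨Y, hMY, hYs⟩ := Nat.sInf_mem hSne
  have hmin : ∀ Z : Fin q → Set V, KModel G q Z → MSize Y ≤ MSize Z := by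
    intro Z hZ
    rw [hYs]
    exact Nat.sInf_le ⟨Z, hZ, rfl⟩
  exact main_bound hMY hmin h


end Auxiliary

/-- If `G` has no `W₄` induced minor, then its Hadwiger number satisfies
`η(G) ≤ ω(G) + 5`. -/
theorem hadwiger_le_of_no_W4_inducedMinor {V : Type} [Fintype V] (G : SimpleGraph V)
    (h : ¬ HasInducedMinor G wheel4) :
    hadwigerNumber G ≤ G.cliqueNum + 5 := by
  have h0 : (0 : ℕ) ∈ {p | HasMinor G (⊤ : SimpleGraph (Fin p))} :=
    ⟨fun i => i.elim0, fun u => u.elim0, fun u => u.elim0, fun u _ _ => u.elim0⟩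
  show sSup {p | HasMinor G (⊤ : SimpleGraph (Fin p))} ≤ G.cliqueNum + 5
  refine csSup_le ⟨0, h0⟩ ?_
  rintro b ⟨X, hd, hc, ha⟩
  exact hadwiger_bound_final G h X hd hc ha
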